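/- Let a < b and let Φ(r,θ) = (R(r,θ), Θ(r,θ)) be a C¹ map of [a,b] × ℝ to itself commuting with the translation T(r,θ) = (r, θ+2π), preserving Ω = r dr ∧ dθ, mapping each boundary component into itself, and with ∂R/∂r > 0 everywhere. Then the 1-form λ = ((R² − r²)/2) dθ + R(θ − Θ) dR (written in the coordinates (R,θ)) is closed on [a,b] × ℝ. -/

import Mathlib

open Filter Set Real
open scoped Topology

noncomputable section

set_option maxHeartbeats 1000000
set_option synthInstance.maxHeartbeats 1000000

/-- The strip [a,b] × ℝ, the universal cover of the annulus. -/
def Strip (a b : ℝ) : Set (ℝ × ℝ) := Set.Icc a b ×ˢ (Set.univ : Set ℝ)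

/-- Deck transformation T(r,θ) = (r, θ + 2π). -/
def Tmap (q : ℝ × ℝ) : ℝ × ℝ := (q.1, q.2 + 2 * π)

/-- The 1-form λ = ((R² − r²)/2) dθ + R(θ − Θ) dR written in the coordinates
(R,θ): here q = (R,θ), Ψinv q = (r,θ) is the point of the strip whose image
under Ψ(r,θ)=(R(r,θ),θ) is q, so r = (Ψinv q).1 and Θ = (Φ (Ψinv q)).2. -/
def lamForm (Φ Ψinv : ℝ × ℝ → ℝ × ℝ) (q : ℝ × ℝ) : (ℝ × ℝ) →L[ℝ] ℝ :=
  ((q.1 ^ 2 - ((Ψinv q).1) ^ 2) / 2) • ContinuousLinearMap.snd ℝ ℝ ℝ +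
    (q.1 * (q.2 - (Φ (Ψinv q)).2)) • ContinuousLinearMap.fst ℝ ℝ ℝ

/-- Within-set version of the easy direction of the inverse function theorem. -/
theorem hasFDerivWithinAt_of_left_inverse {E F : Type*} [NormedAddCommGroup E] [NormedSpace ℝ E]
    [NormedAddCommGroup F] [NormedSpace ℝ F]
    {f : E → F} {f' : E ≃L[ℝ] F} {g : F → E} {s : Set E} {t : Set F} {a : F}
    (hg : Tendsto g (𝓝[t] a) (𝓝[s] (g a)))
    (hf : HasFDerivWithinAt f (f' : E →L[ℝ] F) s (g a))
    (hfg : ∀ᶠ y in 𝓝[t] a, f (g y) = y) (ha : f (g a) = a) :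
    HasFDerivWithinAt g (f'.symm : F →L[ℝ] E) t a := by
  have : (fun x : F => g x - g a - f'.symm (x - a)) =O[𝓝[t] a]
      fun x : F => f' (g x - g a) - (x - a) := by
    refine ((f'.symm : F →L[ℝ] E).isBigO_comp _ _).congr (fun x => ?_) fun _ => rfl
    simp
  refine HasFDerivWithinAt.of_isLittleO <| this.trans_isLittleO ?_
  clear this
  refine ((hf.isLittleO.comp_tendsto hg).symm.congr' (hfg.mono ?_) .rfl).trans_isBigO ?_
  · intro p hp
    simp [hp, ha]
  · refine ((hf.isTheta_sub f'.toHomeomorph.isInducing).2.comp_tendsto hg).congr'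
      (Eventually.of_forall fun _ => rfl) (hfg.mono ?_)
    rintro p hp
    simp only [(· ∘ ·), hp, ha]

/-- Inverse of a continuous bijection between compact sets is continuous. -/
theorem continuousOn_inv_of_compact {X Y : Type*} [TopologicalSpace X] [TopologicalSpace Y]
    [T2Space X] [T2Space Y] {f : X → Y} {g : Y → X} {K : Set X} {L : Set Y}
    (hK : IsCompact K) (hf : ContinuousOn f K) (hgL : MapsTo g L K)
    (hgf : ∀ x ∈ K, g (f x) = x) (hfg : ∀ y ∈ L, f (g y) = y) : ContinuousOn g L := by
  rw [continuousOn_iff_isClosed]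
  intro C hC
  refine ⟨f '' (K ∩ C), ((hK.inter_right hC).image_of_continuousOn
    (hf.mono inter_subset_left)).isClosed, ?_⟩
  ext y
  constructor
  · rintro ⟨hyC, hyL⟩
    exact ⟨⟨g y, ⟨hgL hyL, hyC⟩, hfg y hyL⟩, hyL⟩
  · rintro ⟨⟨x, ⟨hxK, hxC⟩, rfl⟩, hyL⟩
    refine ⟨?_, hyL⟩
    show g (f x) ∈ C
    rw [hgf x hxK]; exact hxC

/-- for a C¹ area-preserving map Φ = (R,Θ) of the strip [a,b]×ℝ
commuting with T, preserving the boundary components, with ∂R/∂r > 0, the 1-form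
λ = ((R²−r²)/2)dθ + R(θ−Θ)dR (in the coordinates (R,θ)) is closed. -/
theorem lam_closed (a b : ℝ) (hab : a < b) (Φ Ψinv : ℝ × ℝ → ℝ × ℝ)
    (hC1 : ContDiffOn ℝ 1 Φ (Strip a b))
    (hmaps : Set.MapsTo Φ (Strip a b) (Strip a b))
    (hT : ∀ q ∈ Strip a b, Φ (Tmap q) = Tmap (Φ q))
    (hbdry : ∀ θ : ℝ, (Φ (a, θ)).1 = a ∧ (Φ (b, θ)).1 = b)
    (harea : ∀ q ∈ Strip a b,
      (Φ q).1 * (fderivWithin ℝ Φ (Strip a b) q).det = q.1)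
    (hmono : ∀ q ∈ Strip a b,
      0 < fderivWithin ℝ (fun p => (Φ p).1) (Strip a b) q (1, 0))
    (hΨmaps : Set.MapsTo Ψinv (Strip a b) (Strip a b))
    (hΨleft : ∀ q ∈ Strip a b, Ψinv ((Φ q).1, q.2) = q)
    (hΨright : ∀ q ∈ Strip a b, ((Φ (Ψinv q)).1, (Ψinv q).2) = q) :
    ∀ q ∈ Strip a b, ∀ v w : ℝ × ℝ,
      fderivWithin ℝ (lamForm Φ Ψinv) (Strip a b) q v w =
      fderivWithin ℝ (lamForm Φ Ψinv) (Strip a b) q w v := by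
  set s : Set (ℝ × ℝ) := Strip a b with hs_def
  have hsconv : Convex ℝ s := (convex_Icc a b).prod convex_univ
  have hs : UniqueDiffOn ℝ s := by
    refine uniqueDiffOn_convex hsconv ⟨((a + b) / 2, 0), ?_⟩
    rw [hs_def, Strip, interior_prod_eq, interior_Icc, interior_univ]
    exact ⟨by constructor <;> linarith, mem_univ _⟩
  intro q hq v w
  -- basic facts about p = Ψinv q
  set p : ℝ × ℝ := Ψinv q with hp_def
  have hp : p ∈ s := hΨmaps hq
  have hpq : ((Φ p).1, p.2) = q := hΨright q hq
  have hpq1 : (Φ p).1 = q.1 := by rw [← hpq]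
  have hpq2 : p.2 = q.2 := by rw [← hpq]
  -- the derivative of Φ at p
  set A : (ℝ × ℝ) →L[ℝ] (ℝ × ℝ) := fderivWithin ℝ Φ s p with hA_def
  have hΦ : HasFDerivWithinAt Φ A s p :=
    (hC1.differentiableOn one_ne_zero p hp).hasFDerivWithinAt
  set Rr : ℝ := (A (1, 0)).1 with hRr_def
  set Rθ : ℝ := (A (0, 1)).1 with hRθ_def
  set Θr : ℝ := (A (1, 0)).2 with hΘr_def
  set Θθ : ℝ := (A (0, 1)).2 with hΘθ_def
  have hA : ∀ x : ℝ × ℝ, A x = (x.1 * Rr + x.2 * Rθ, x.1 * Θr + x.2 * Θθ) := by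
    intro x
    have hx : x = x.1 • ((1 : ℝ), (0 : ℝ)) + x.2 • ((0 : ℝ), (1 : ℝ)) := by
      ext <;> simp
    rw [show A x = A (x.1 • ((1 : ℝ), (0 : ℝ)) + x.2 • ((0 : ℝ), (1 : ℝ))) from by rw [← hx],
      map_add, map_smul, map_smul]
    ext <;> simp [mul_comm] <;> ring
  -- derivative of R = (Φ ·).1
  have hfstd : HasFDerivWithinAt (fun x => (Φ x).1) ((ContinuousLinearMap.fst ℝ ℝ ℝ).comp A) s p :=
    (ContinuousLinearMap.fst ℝ ℝ ℝ).hasFDerivAt.comp_hasFDerivWithinAt p hΦ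
  have hRrpos : 0 < Rr := by
    have h0 := hmono p hp
    rw [hfstd.fderivWithin (hs p hp)] at h0
    exact h0
  have hRrne : Rr ≠ 0 := ne_of_gt hRrpos
  -- the key identity from area preservation
  have detA : A.det = Rr * Θθ - Rθ * Θr := by
    have h1 : A.det = LinearMap.det (A : (ℝ × ℝ) →ₗ[ℝ] (ℝ × ℝ)) := rfl
    rw [h1, ← LinearMap.det_toMatrix (Module.Basis.finTwoProd ℝ), Matrix.det_fin_two]
    simp [LinearMap.toMatrix_apply, Module.Basis.finTwoProd_zero, Module.Basis.finTwoProd_one,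
      Module.Basis.coe_finTwoProd_repr]
    rfl
  have key : p.1 = q.1 * (Rr * Θθ - Rθ * Θr) := by
    have h := harea p hp
    rw [← hA_def, hpq1, detA] at h
    linarith
  -- the invertible derivative of Ψ(r,θ) = (R(r,θ), θ)
  set B : (ℝ × ℝ) →L[ℝ] (ℝ × ℝ) :=
    ((ContinuousLinearMap.fst ℝ ℝ ℝ).comp A).prod (ContinuousLinearMap.snd ℝ ℝ ℝ) with hB_def
  set B' : (ℝ × ℝ) →L[ℝ] (ℝ × ℝ) :=
    (((1 : ℝ) / Rr) • (ContinuousLinearMap.fst ℝ ℝ ℝ -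
      Rθ • ContinuousLinearMap.snd ℝ ℝ ℝ)).prod (ContinuousLinearMap.snd ℝ ℝ ℝ) with hB'_def
  have hB : ∀ x : ℝ × ℝ, B x = (x.1 * Rr + x.2 * Rθ, x.2) := by
    intro x
    simp [hB_def, hA x]
  have hB' : ∀ x : ℝ × ℝ, B' x = ((x.1 - Rθ * x.2) / Rr, x.2) := by
    intro x
    simp [hB'_def]
    ring
  have h1 : Function.LeftInverse B' B := by
    intro x
    rw [hB, hB']
    ext
    · show ((x.1 * Rr + x.2 * Rθ) - Rθ * x.2) / Rr = x.1
      field_simp; ring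
    · rfl
  have h2 : Function.RightInverse B' B := by
    intro x
    rw [hB', hB]
    ext
    · show ((x.1 - Rθ * x.2) / Rr) * Rr + x.2 * Rθ = x.1
      field_simp; ring
    · rfl
  set E : (ℝ × ℝ) ≃L[ℝ] (ℝ × ℝ) := ContinuousLinearEquiv.equivOfInverse B B' h1 h2 with hE_def
  have hEcoe : (E : (ℝ × ℝ) →L[ℝ] (ℝ × ℝ)) = B := rfl
  have hEsymm : (E.symm : (ℝ × ℝ) →L[ℝ] (ℝ × ℝ)) = B' := rfl
  -- Ψ has derivative B at p
  have hΨd : HasFDerivWithinAt (fun x : ℝ × ℝ => ((Φ x).1, x.2)) B s p :=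
    hfstd.prodMk (hasFDerivWithinAt_snd)
  -- continuity of Ψinv within s at q
  have hΨq2 : ∀ y ∈ s, (Ψinv y).2 = y.2 := by
    intro y hy
    have h := congrArg Prod.snd (hΨright y hy)
    simpa using h
  set K : Set (ℝ × ℝ) := Icc a b ×ˢ Icc (q.2 - 1) (q.2 + 1) with hK_def
  have hKs : K ⊆ s := fun x hx => ⟨hx.1, mem_univ _⟩
  have hKcpt : IsCompact K := isCompact_Icc.prod isCompact_Icc
  have hcontK : ContinuousOn Ψinv K := by
    refine continuousOn_inv_of_compact (f := fun x : ℝ × ℝ => ((Φ x).1, x.2)) hKcpt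
      (ContinuousOn.prodMk ((hC1.continuousOn.mono hKs).fst) continuousOn_snd) ?_ ?_ ?_
    · intro y hy
      exact ⟨(hΨmaps (hKs hy)).1, by rw [hΨq2 y (hKs hy)]; exact hy.2⟩
    · intro x hx
      exact hΨleft x (hKs hx)
    · intro y hy
      exact hΨright y (hKs hy)
  have hqK : q ∈ K := ⟨hq.1, by constructor <;> simp <;> linarith⟩
  have hKmem : K ∈ 𝓝[s] q := by
    refine Filter.mem_of_superset (inter_mem_nhdsWithin s
      (prod_mem_nhds univ_mem (Ioo_mem_nhds (by linarith) (by linarith)) :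
        (univ ×ˢ Ioo (q.2 - 1) (q.2 + 1) : Set (ℝ × ℝ)) ∈ 𝓝 q)) ?_
    rintro x ⟨hxs, hxV⟩
    exact ⟨hxs.1, ⟨le_of_lt hxV.2.1, le_of_lt hxV.2.2⟩⟩
  have hgcont : Tendsto Ψinv (𝓝[s] q) (𝓝[s] p) :=
    ((hcontK q hqK).mono_of_mem_nhdsWithin hKmem).tendsto_nhdsWithin hΨmaps
  -- derivative of Ψinv
  have hinv : HasFDerivWithinAt Ψinv B' s q := by
    have := hasFDerivWithinAt_of_left_inverse (f := fun x : ℝ × ℝ => ((Φ x).1, x.2))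
      (f' := E) (g := Ψinv) (s := s) (t := s) (a := q) hgcont (by rw [hEcoe]; exact hΨd)
      (eventually_nhdsWithin_of_forall hΨright) (hΨright q hq)
    rwa [hEsymm] at this
  -- derivatives of the coefficient functions
  have hrd : HasFDerivWithinAt (fun y => (Ψinv y).1)
      ((ContinuousLinearMap.fst ℝ ℝ ℝ).comp B') s q :=
    (ContinuousLinearMap.fst ℝ ℝ ℝ).hasFDerivAt.comp_hasFDerivWithinAt q hinv
  have hΘd : HasFDerivWithinAt (fun y => (Φ (Ψinv y)).2)
      ((ContinuousLinearMap.snd ℝ ℝ ℝ).comp (A.comp B')) s q := by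
    have hcomp : HasFDerivWithinAt (Φ ∘ Ψinv) (A.comp B') s q := hΦ.comp q hinv hΨmaps
    exact (ContinuousLinearMap.snd ℝ ℝ ℝ).hasFDerivAt.comp_hasFDerivWithinAt q hcomp
  have hx1 : HasFDerivWithinAt (fun y : ℝ × ℝ => y.1) (ContinuousLinearMap.fst ℝ ℝ ℝ) s q :=
    hasFDerivWithinAt_fst
  have hx2 : HasFDerivWithinAt (fun y : ℝ × ℝ => y.2) (ContinuousLinearMap.snd ℝ ℝ ℝ) s q :=
    hasFDerivWithinAt_snd
  -- coefficient functions
  set Cr : (ℝ × ℝ) →L[ℝ] ℝ := (ContinuousLinearMap.fst ℝ ℝ ℝ).comp B' with hCr_def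
  set CΘ : (ℝ × ℝ) →L[ℝ] ℝ := (ContinuousLinearMap.snd ℝ ℝ ℝ).comp (A.comp B') with hCΘ_def
  have hCr : ∀ x : ℝ × ℝ, Cr x = (x.1 - Rθ * x.2) / Rr := by
    intro x
    simp [hCr_def, hB' x]
  have hCΘ : ∀ x : ℝ × ℝ, CΘ x = ((x.1 - Rθ * x.2) / Rr) * Θr + x.2 * Θθ := by
    intro x
    simp [hCΘ_def, hB' x, hA]
  -- derivative of the coefficient of dθ
  have hf1 : HasFDerivWithinAt
      (fun y : ℝ × ℝ => (1 / 2 : ℝ) * (y.1 * y.1 - (Ψinv y).1 * (Ψinv y).1))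
      ((1 / 2 : ℝ) • ((q.1 • ContinuousLinearMap.fst ℝ ℝ ℝ + q.1 • ContinuousLinearMap.fst ℝ ℝ ℝ)
        - (p.1 • Cr + p.1 • Cr))) s q :=
    ((hx1.mul hx1).sub (hrd.mul hrd)).const_mul (1 / 2)
  -- derivative of the coefficient of dR
  have hg1 : HasFDerivWithinAt (fun y : ℝ × ℝ => y.1 * (y.2 - (Φ (Ψinv y)).2))
      (q.1 • (ContinuousLinearMap.snd ℝ ℝ ℝ - CΘ) +
        (q.2 - (Φ p).2) • ContinuousLinearMap.fst ℝ ℝ ℝ) s q :=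
    hx1.mul (hx2.sub hΘd)
  -- derivative of lamForm
  have hfun : lamForm Φ Ψinv = fun y : ℝ × ℝ =>
      ((1 / 2 : ℝ) * (y.1 * y.1 - (Ψinv y).1 * (Ψinv y).1)) • ContinuousLinearMap.snd ℝ ℝ ℝ +
        (y.1 * (y.2 - (Φ (Ψinv y)).2)) • ContinuousLinearMap.fst ℝ ℝ ℝ := by
    funext y
    simp only [lamForm]
    congr 2
    ring
  set Df1 : (ℝ × ℝ) →L[ℝ] ℝ :=
    (1 / 2 : ℝ) • ((q.1 • ContinuousLinearMap.fst ℝ ℝ ℝ + q.1 • ContinuousLinearMap.fst ℝ ℝ ℝ)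
        - (p.1 • Cr + p.1 • Cr)) with hDf1_def
  set Dg1 : (ℝ × ℝ) →L[ℝ] ℝ :=
    q.1 • (ContinuousLinearMap.snd ℝ ℝ ℝ - CΘ) +
        (q.2 - (Φ p).2) • ContinuousLinearMap.fst ℝ ℝ ℝ with hDg1_def
  have hlam : HasFDerivWithinAt (lamForm Φ Ψinv)
      ((((1 / 2 : ℝ) * (q.1 * q.1 - p.1 * p.1)) • (0 : (ℝ × ℝ) →L[ℝ] ((ℝ × ℝ) →L[ℝ] ℝ)) +
          Df1.smulRight (ContinuousLinearMap.snd ℝ ℝ ℝ)) +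
        ((q.1 * (q.2 - (Φ p).2)) • (0 : (ℝ × ℝ) →L[ℝ] ((ℝ × ℝ) →L[ℝ] ℝ)) +
          Dg1.smulRight (ContinuousLinearMap.fst ℝ ℝ ℝ))) s q := by
    rw [hfun]
    exact (hf1.smul (hasFDerivWithinAt_const _ _ _)).add (hg1.smul (hasFDerivWithinAt_const (ContinuousLinearMap.fst ℝ ℝ ℝ) _ _))
  rw [hlam.fderivWithin (hs q hq)]
  simp only [hDf1_def, hDg1_def, ContinuousLinearMap.add_apply, ContinuousLinearMap.smul_apply,
    ContinuousLinearMap.zero_apply, ContinuousLinearMap.smulRight_apply,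
    ContinuousLinearMap.coe_sub', Pi.sub_apply, ContinuousLinearMap.coe_fst',
    ContinuousLinearMap.coe_snd', smul_eq_mul, smul_zero, zero_add, hCr, hCΘ]
  field_simp
  linear_combination (2 * (v.2 * w.1 - v.1 * w.2)) * key
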